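/- For any function ν : ℕ → ℝ there exist binary sequences s, t ∈ S with the following properties: (i) for every n ≥ 0 the local intersection multiplicity μ(n) := dim_ℂ ℂ⟦X,Y⟧/(φ_s, φ_{σ^n(t)}) is finite; (ii) μ(n) > ν(n) for infinitely many n. Since φ_u divides φ_{σ(u)}(X² − Y⁴, Y⁴) in ℂ⟦X,Y⟧ for every u ∈ S (i.e., the polynomial map f(x,y) = (x² − y⁴, y⁴) sends the curve C_u = {φ_u = 0} into C_{σ(u)}), μ(n) is the local intersection multiplicity C_s · f^n(C_t) at the origin. -/

import Mathlib

set_option maxHeartbeats 1600000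


noncomputable section

/-- The space of binary sequences `{0,1}^ℕ`. -/
abbrev BinSeq := ℕ → Fin 2

/-- The left-shift map `σ`. -/
def shift (s : BinSeq) : BinSeq := fun n => s (n + 1)

/-- `a : S → ℕ → ℂ` satisfies the recursion defining the coefficients `aₙˢ`:
`a₀ˢ = (−1)^{s₀}` and `a_{n+1}ˢ = −(1/(2a₀ˢ)) Σ_{i+j=n+1, i,j≥1} aᵢˢ aⱼˢ` if `4 ∤ n`,
with the extra term `−a_{n/4}^{σ(s)}/(2a₀ˢ)` if `4 ∣ n`. -/
def IsCoeffFamily (a : BinSeq → ℕ → ℂ) : Prop :=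
  (∀ s : BinSeq, a s 0 = (-1 : ℂ) ^ (s 0 : ℕ)) ∧
  (∀ (s : BinSeq) (n : ℕ), a s (n + 1) =
    if 4 ∣ n then
      -(a (shift s) (n / 4)) / (2 * a s 0)
        - (∑ i ∈ Finset.Ico 1 (n + 1), a s i * a s (n + 1 - i)) / (2 * a s 0)
    else
      -(∑ i ∈ Finset.Ico 1 (n + 1), a s i * a s (n + 1 - i)) / (2 * a s 0))

/-- The series `Σ_{n≥0} aₙˢ Y^(2+4n)` viewed inside `ℂ⟦X,Y⟧`
(variable `0` is `X`, variable `1` is `Y`). -/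
def tailSer (a : BinSeq → ℕ → ℂ) (s : BinSeq) : MvPowerSeries (Fin 2) ℂ :=
  fun d => if d 0 = 0 ∧ d 1 % 4 = 2 then a s ((d 1 - 2) / 4) else 0

/-- The two-variable series `φ_s = X + Σ_{n≥0} aₙˢ Y^(2+4n) ∈ ℂ⟦X,Y⟧`. -/
def phi (a : BinSeq → ℕ → ℂ) (s : BinSeq) : MvPowerSeries (Fin 2) ℂ :=
  MvPowerSeries.X 0 + tailSer a s

namespace Stmt10Aux

open MvPowerSeries Finset

abbrev R2 := MvPowerSeries (Fin 2) ℂ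

def ee (i j : ℕ) : Fin 2 →₀ ℕ := Finsupp.single 0 i + Finsupp.single 1 j

@[simp] lemma ee_apply0 (i j : ℕ) : ee i j 0 = i := by simp [ee]
@[simp] lemma ee_apply1 (i j : ℕ) : ee i j 1 = j := by simp [ee]

lemma eq_ee (v : Fin 2 →₀ ℕ) : v = ee (v 0) (v 1) := by
  ext x; fin_cases x <;> simp [ee]

lemma ee_zero_left (j : ℕ) : ee 0 j = Finsupp.single 1 j := by
  ext x; fin_cases x <;> simp [ee]

lemma ee_zero_right (i : ℕ) : ee i 0 = Finsupp.single 0 i := by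
  ext x; fin_cases x <;> simp [ee]

lemma ee_inj {i j i' j' : ℕ} (h : ee i j = ee i' j') : i = i' ∧ j = j' := by
  constructor
  · have := congrArg (fun v : Fin 2 →₀ ℕ => v 0) h; simpa using this
  · have := congrArg (fun v : Fin 2 →₀ ℕ => v 1) h; simpa using this

lemma ee_add (i j i' j' : ℕ) : ee i j + ee i' j' = ee (i+i') (j+j') := by
  ext x; fin_cases x <;> simp [ee]

/-- coefficient of `C * G` when `G` is supported on pure `Y`-monomials. -/
lemma coeff_mul_yser (C G : R2) (hG : ∀ v : Fin 2 →₀ ℕ, v 0 ≠ 0 → coeff v G = 0)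
    (i j : ℕ) :
    coeff (ee i j) (C * G)
      = ∑ j2 ∈ range (j+1), coeff (ee i (j - j2)) C * coeff (ee 0 j2) G := by
  classical
  rw [coeff_mul]
  have h1 : ∑ p ∈ Finset.HasAntidiagonal.antidiagonal (ee i j), coeff p.1 C * coeff p.2 G
      = ∑ p ∈ (Finset.HasAntidiagonal.antidiagonal (ee i j)).filter
          (fun p : (Fin 2 →₀ ℕ) × (Fin 2 →₀ ℕ) => p.2 0 = 0),
          coeff p.1 C * coeff p.2 G := by
    refine (Finset.sum_filter_of_ne ?_).symm
    intro p _ hp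
    by_contra h
    rw [hG p.2 h, mul_zero] at hp
    exact hp rfl
  rw [h1]
  refine Finset.sum_bij' (fun p _ => p.2 1)
    (fun j2 _ => (ee i (j - j2), ee 0 j2)) ?_ ?_ ?_ ?_ ?_
  · intro p hp
    simp only [Finset.mem_filter, Finset.HasAntidiagonal.mem_antidiagonal] at hp
    have := congrArg (fun v : Fin 2 →₀ ℕ => v 1) hp.1
    simp only [Finsupp.add_apply, ee_apply1] at this
    simp only [Finset.mem_range]
    omega
  · intro j2 hj2
    simp only [Finset.mem_range] at hj2
    refine Finset.mem_filter.mpr ⟨Finset.HasAntidiagonal.mem_antidiagonal.mpr ?_, by simp⟩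
    rw [ee_add]
    congr 1 <;> omega
  · intro p hp
    simp only [Finset.mem_filter, Finset.HasAntidiagonal.mem_antidiagonal] at hp
    have h1' := congrArg (fun v : Fin 2 →₀ ℕ => v 1) hp.1
    have h0' := congrArg (fun v : Fin 2 →₀ ℕ => v 0) hp.1
    simp only [Finsupp.add_apply, ee_apply1, ee_apply0] at h1' h0'
    have hp2 : p.2 = ee 0 (p.2 1) := by
      nth_rewrite 1 [eq_ee p.2]; rw [hp.2]
    have hp1 : p.1 = ee i (j - p.2 1) := by
      nth_rewrite 1 [eq_ee p.1]; congr 1 <;> omega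
    exact Prod.ext hp1.symm hp2.symm
  · intro j2 hj2; simp
  · intro p hp
    simp only [Finset.mem_filter, Finset.HasAntidiagonal.mem_antidiagonal] at hp
    have h1' := congrArg (fun v : Fin 2 →₀ ℕ => v 1) hp.1
    have h0' := congrArg (fun v : Fin 2 →₀ ℕ => v 0) hp.1
    simp only [Finsupp.add_apply, ee_apply1, ee_apply0] at h1' h0'
    have hp2 : p.2 = ee 0 (p.2 1) := by nth_rewrite 1 [eq_ee p.2]; rw [hp.2]
    have hp1 : p.1 = ee i (j - p.2 1) := by nth_rewrite 1 [eq_ee p.1]; congr 1 <;> omega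
    rw [← hp1, ← hp2]

lemma coeff_mul_X_succ (C : R2) (k b : ℕ) :
    coeff (ee (k+1) b) (C * X 0) = coeff (ee k b) C := by
  rw [X_def, coeff_mul_monomial]
  rw [if_pos (by rw [Finsupp.single_le_iff]; simp)]
  rw [mul_one]
  have h2 : ee (k+1) b - Finsupp.single 0 1 = ee k b := by
    ext x; fin_cases x <;> simp [ee, Finsupp.tsub_apply, Finsupp.single_apply]
  rw [h2]

lemma coeff_mul_X_zero (C : R2) (b : ℕ) :
    coeff (ee 0 b) (C * X 0) = 0 := by
  rw [X_def, coeff_mul_monomial, if_neg]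
  rw [Finsupp.single_le_iff]; simp

lemma sum_range_to_Ico (f : ℕ → ℂ) (b : ℕ) (h : ∀ j < 2, f j = 0) :
    ∑ j ∈ Finset.range (b+1), f j = ∑ j ∈ Finset.Ico 2 (b+1), f j := by
  rw [Finset.range_eq_Ico]
  rcases le_or_gt 2 (b+1) with hb | hb
  · rw [← Finset.sum_Ico_consecutive f (Nat.zero_le 2) hb]
    have hz : ∑ j ∈ Finset.Ico 0 2, f j = 0 := by
      apply Finset.sum_eq_zero
      intro j hj
      exact h j (by simpa using (Finset.mem_Ico.mp hj).2)
    rw [hz, zero_add]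
  · have h1 : Finset.Ico 2 (b+1) = ∅ := Finset.Ico_eq_empty (by omega)
    rw [h1, Finset.sum_empty]
    apply Finset.sum_eq_zero
    intro j hj
    exact h j (by have := Finset.mem_Ico.mp hj; omega)

lemma coeff_mul_XG (C G : R2) (hGY : ∀ v : Fin 2 →₀ ℕ, v 0 ≠ 0 → coeff v G = 0)
    (hG2 : ∀ j < 2, coeff (ee 0 j) G = 0) (k b : ℕ) :
    coeff (ee (k+1) b) (C * (X 0 + G)) =
      coeff (ee k b) C
        + ∑ j ∈ Finset.Ico 2 (b+1), coeff (ee (k+1) (b - j)) C * coeff (ee 0 j) G := by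
  rw [mul_add, map_add, coeff_mul_X_succ, coeff_mul_yser C G hGY]
  congr 1
  exact sum_range_to_Ico _ b (fun j hj => by rw [hG2 j hj, mul_zero])

lemma coeff_mul_XG_zero (C G : R2) (hGY : ∀ v : Fin 2 →₀ ℕ, v 0 ≠ 0 → coeff v G = 0)
    (hG2 : ∀ j < 2, coeff (ee 0 j) G = 0) (b : ℕ) :
    coeff (ee 0 b) (C * (X 0 + G)) =
      ∑ j ∈ Finset.Ico 2 (b+1), coeff (ee 0 (b - j)) C * coeff (ee 0 j) G := by
  rw [mul_add, map_add, coeff_mul_X_zero, coeff_mul_yser C G hGY, zero_add]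
  exact sum_range_to_Ico _ b (fun j hj => by rw [hG2 j hj, mul_zero])

/-- the recursively defined coefficients used in the spanning argument -/
def spanC (F G : R2) : ℕ → ℕ → ℂ
  | b, k =>
    coeff (ee (k+1) b) F -
      ∑ j ∈ (Finset.Ico 2 (b+1)).attach,
        spanC F G (b - j.1) (k+1) * coeff (ee 0 j.1) G
  termination_by b k => b
  decreasing_by
    · have := Finset.mem_Ico.mp j.2; omega

lemma spanC_eq (F G : R2) (b k : ℕ) :
    spanC F G b k =
      coeff (ee (k+1) b) F -
        ∑ j ∈ Finset.Ico 2 (b+1), spanC F G (b - j) (k+1) * coeff (ee 0 j) G := by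
  rw [spanC]
  congr 1
  rw [← Finset.sum_attach (Finset.Ico 2 (b+1)) (fun j => spanC F G (b - j) (k+1) * coeff (ee 0 j) G)]

def CserOf (F G : R2) : R2 := fun v => spanC F G (v 1) (v 0)
def DOf (F G : R2) : R2 := F - CserOf F G * (X 0 + G)
def POf (F G : R2) (d : ℕ) : R2 := fun v => if v 1 < d then coeff v (DOf F G) else 0
def BOf (F G : R2) (d : ℕ) : R2 := fun v => coeff (v + Finsupp.single 1 d) (DOf F G)
def VOf (G H : R2) (d : ℕ) : R2 := fun w => coeff (w + Finsupp.single 1 d) (H - G)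

lemma coeff_CserOf (F G : R2) (k b : ℕ) :
    coeff (ee k b) (CserOf F G) = spanC F G b k := by
  rw [coeff_apply]; show spanC F G ((ee k b) 1) ((ee k b) 0) = _; rw [ee_apply0, ee_apply1]

lemma coeff_POf (F G : R2) (d : ℕ) (v : Fin 2 →₀ ℕ) :
    coeff v (POf F G d) = if v 1 < d then coeff v (DOf F G) else 0 := rfl

lemma coeff_BOf (F G : R2) (d : ℕ) (v : Fin 2 →₀ ℕ) :
    coeff v (BOf F G d) = coeff (v + Finsupp.single 1 d) (DOf F G) := rfl

lemma coeff_VOf (G H : R2) (d : ℕ) (v : Fin 2 →₀ ℕ) :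
    coeff v (VOf G H d) = coeff (v + Finsupp.single 1 d) (H - G) := rfl

lemma coeff_ysum (c : ℕ → ℂ) (d : ℕ) (v : Fin 2 →₀ ℕ) :
    coeff v (∑ j ∈ Finset.range d, c j • (X 1 : R2) ^ j)
      = if v 0 = 0 ∧ v 1 < d then c (v 1) else 0 := by
  rw [map_sum]
  simp only [map_smul, smul_eq_mul, coeff_X_pow]
  by_cases h : v 0 = 0 ∧ v 1 < d
  · rw [if_pos h]
    rw [Finset.sum_eq_single (v 1)]
    · have hv : v = Finsupp.single 1 (v 1) := by
        rw [← ee_zero_left]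
        conv_lhs => rw [eq_ee v]
        rw [h.1]
      rw [if_pos hv, mul_one]
    · intro j _ hne
      have : v ≠ Finsupp.single 1 j := by
        intro hv
        apply hne
        have h9 := congrArg (fun w : Fin 2 →₀ ℕ => w 1) hv
        simp only [Finsupp.single_apply, if_pos rfl] at h9
        simpa using h9.symm
      rw [if_neg this, mul_zero]
    · intro h'
      exact absurd (Finset.mem_range.mpr h.2) h'
  · rw [if_neg h]
    apply Finset.sum_eq_zero
    intro j hj
    have : v ≠ Finsupp.single 1 j := by
      intro hv
      apply h
      constructor
      · have := congrArg (fun w : Fin 2 →₀ ℕ => w 0) hv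
        simpa [Finsupp.single_apply] using this
      · have h9 := congrArg (fun w : Fin 2 →₀ ℕ => w 1) hv
        simp [Finsupp.single_apply] at h9
        rw [h9]
        exact Finset.mem_range.mp hj

    rw [if_neg this, mul_zero]

lemma key (G H : R2) (d : ℕ)
    (hG : ∀ v : Fin 2 →₀ ℕ, coeff v G ≠ 0 → v 0 = 0 ∧ 2 ≤ v 1)
    (hH : ∀ v : Fin 2 →₀ ℕ, coeff v H ≠ 0 → v 0 = 0 ∧ 2 ≤ v 1)
    (hlow : ∀ j, j < d → coeff (ee 0 j) H = coeff (ee 0 j) G)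
    (hne : coeff (ee 0 d) H ≠ coeff (ee 0 d) G) :
    FiniteDimensional ℂ (R2 ⧸ Ideal.span {X 0 + G, X 0 + H}) ∧
      d ≤ Module.finrank ℂ (R2 ⧸ Ideal.span {X 0 + G, X 0 + H}) := by
  classical
  set J : Ideal R2 := Ideal.span {X 0 + G, X 0 + H} with hJ
  have hGY : ∀ v : Fin 2 →₀ ℕ, v 0 ≠ 0 → coeff v G = 0 := by
    intro v h; by_contra hc; exact h (hG v hc).1
  have hHY : ∀ v : Fin 2 →₀ ℕ, v 0 ≠ 0 → coeff v H = 0 := by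
    intro v h; by_contra hc; exact h (hH v hc).1
  have hG2 : ∀ j, j < 2 → coeff (ee 0 j) G = 0 := by
    intro j hj; by_contra hc
    have := (hG _ hc).2; rw [ee_apply1] at this; omega
  have hΔlow : ∀ v : Fin 2 →₀ ℕ, v 1 < d → coeff v (H - G) = 0 := by
    intro v hv
    by_cases h0 : v 0 = 0
    · have hv2 : v = ee 0 (v 1) := by
        conv_lhs => rw [eq_ee v]
        rw [h0]
      rw [hv2, map_sub, hlow _ (by rwa [hv2, ee_apply1] at hv), sub_self]
    · rw [map_sub, hGY v h0, hHY v h0, sub_zero]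
  have hXG : X 0 + G ∈ J := Ideal.subset_span (by simp)
  have hXH : X 0 + H ∈ J := Ideal.subset_span (by simp)
  have hΔJ : H - G ∈ J := by
    have : H - G = (X 0 + H) - (X 0 + G) := by ring
    rw [this]; exact sub_mem hXH hXG
  -- the unit factor
  have hYdV : (X 1 : R2) ^ d * VOf G H d = H - G := by
    apply MvPowerSeries.ext
    intro v
    rw [X_pow_eq, coeff_monomial_mul]
    by_cases hle : Finsupp.single 1 d ≤ v
    · rw [if_pos hle, one_mul, coeff_VOf, tsub_add_cancel_of_le hle]
    · rw [if_neg hle]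
      have hvd : v 1 < d := by
        by_contra hc
        exact hle (Finsupp.single_le_iff.mpr (by omega))
      exact (hΔlow v hvd).symm
  have hVunit : IsUnit (VOf G H d) := by
    rw [MvPowerSeries.isUnit_iff_constantCoeff]
    apply isUnit_iff_ne_zero.mpr
    have h0 : (constantCoeff) (VOf G H d) = coeff (ee 0 d) (H - G) := by
      rw [← coeff_zero_eq_constantCoeff_apply, coeff_VOf, zero_add, ee_zero_left]
    rw [h0, map_sub]
    exact sub_ne_zero.mpr hne
  have hYd : (X 1 : R2) ^ d ∈ J := by
    obtain ⟨u, hu⟩ := hVunit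
    have h2 : (X 1 : R2) ^ d = (H - G) * ↑u⁻¹ := by
      rw [← hYdV, ← hu, mul_assoc, Units.mul_inv, mul_one]
    rw [h2]
    exact Ideal.mul_mem_right _ _ hΔJ
  -- spanning
  have hspan : ∀ F : R2, ∃ P : R2,
      (∀ v : Fin 2 →₀ ℕ, coeff v P ≠ 0 → v 0 = 0 ∧ v 1 < d) ∧ F - P ∈ J := by
    intro F
    have hD : ∀ v : Fin 2 →₀ ℕ, v 0 ≠ 0 → coeff v (DOf F G) = 0 := by
      intro v hv
      obtain ⟨k, hk⟩ := Nat.exists_eq_succ_of_ne_zero hv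
      have hv2 : v = ee (k+1) (v 1) := by
        conv_lhs => rw [eq_ee v]
        rw [hk]
      rw [hv2]
      show coeff (ee (k+1) (v 1)) (F - CserOf F G * (X 0 + G)) = 0
      rw [map_sub, coeff_mul_XG _ G hGY hG2, coeff_CserOf]
      have hsc : ∀ j ∈ Finset.Ico 2 (v 1 + 1),
          coeff (ee (k+1) (v 1 - j)) (CserOf F G) * coeff (ee 0 j) G
            = spanC F G (v 1 - j) (k+1) * coeff (ee 0 j) G := by
        intro j _; rw [coeff_CserOf]
      rw [Finset.sum_congr rfl hsc, spanC_eq F G (v 1) k]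
      try ring
    refine ⟨POf F G d, ?_, ?_⟩
    · intro v hv
      have h1 : v 1 < d := by
        by_contra hc
        rw [coeff_POf, if_neg hc] at hv
        exact hv rfl
      refine ⟨?_, h1⟩
      by_contra h0
      rw [coeff_POf, if_pos h1, hD v h0] at hv
      exact hv rfl
    · have hPD : DOf F G = (X 1 : R2) ^ d * BOf F G d + POf F G d := by
        apply MvPowerSeries.ext
        intro v
        rw [map_add, X_pow_eq, coeff_monomial_mul, coeff_POf]
        by_cases hle : Finsupp.single 1 d ≤ v
        · have hvd : ¬ (v 1 < d) := by
            have := Finsupp.single_le_iff.mp hle; omega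
          rw [if_pos hle, if_neg hvd, add_zero, one_mul, coeff_BOf,
            tsub_add_cancel_of_le hle]
        · have hvd : v 1 < d := by
            by_contra hc
            exact hle (Finsupp.single_le_iff.mpr (by omega))
          rw [if_neg hle, if_pos hvd, zero_add]
      have heq : F - POf F G d = CserOf F G * (X 0 + G) + (X 1 : R2) ^ d * BOf F G d := by
        have h4 : F - CserOf F G * (X 0 + G) = (X 1 : R2) ^ d * BOf F G d + POf F G d := hPD
        linear_combination h4
      rw [heq]
      exact add_mem (Ideal.mul_mem_left J _ hXG) (Ideal.mul_mem_right _ J hYd)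
  -- injectivity
  have hinj : ∀ P : R2,
      (∀ v : Fin 2 →₀ ℕ, coeff v P ≠ 0 → v 0 = 0 ∧ v 1 < d) → P ∈ J → P = 0 := by
    intro P hsupp hPJ
    rw [hJ] at hPJ
    obtain ⟨c1, c2, hc⟩ := Ideal.mem_span_pair.mp hPJ
    have hPC : P = (c1 + c2) * (X 0 + G) + (X 1 : R2) ^ d * (c2 * VOf G H d) := by
      linear_combination (-1 : R2) * hc - c2 * hYdV
    have hC0 : ∀ b, b < d → ∀ k, coeff (ee k b) (c1 + c2) = 0 := by
      intro b
      induction b using Nat.strong_induction_on with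
      | _ b IH =>
        intro hb k
        have h1 : coeff (ee (k+1) b) P = 0 := by
          by_contra hc'
          have := (hsupp _ hc').1
          rw [ee_apply0] at this
          omega
        rw [hPC, map_add, coeff_mul_XG _ G hGY hG2] at h1
        have h2 : coeff (ee (k+1) b) ((X 1 : R2) ^ d * (c2 * VOf G H d)) = 0 := by
          rw [X_pow_eq, coeff_monomial_mul, if_neg]
          rw [Finsupp.single_le_iff, ee_apply1]
          omega
        have h3 : ∀ j ∈ Finset.Ico 2 (b+1),
            coeff (ee (k+1) (b - j)) (c1 + c2) * coeff (ee 0 j) G = 0 := by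
          intro j hj
          have hj' := Finset.mem_Ico.mp hj
          rw [IH (b - j) (by omega) (by omega) (k+1), zero_mul]
        rw [h2, add_zero, Finset.sum_eq_zero h3, add_zero] at h1
        exact h1
    apply MvPowerSeries.ext
    intro v
    rw [map_zero]
    by_contra hne'
    obtain ⟨h0, h1⟩ := hsupp v hne'
    apply hne'
    have hv2 : v = ee 0 (v 1) := by
      conv_lhs => rw [eq_ee v]
      rw [h0]
    rw [hv2, hPC, map_add, coeff_mul_XG_zero _ G hGY hG2]
    have hY0 : coeff (ee 0 (v 1)) ((X 1 : R2) ^ d * (c2 * VOf G H d)) = 0 := by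
      rw [X_pow_eq, coeff_monomial_mul, if_neg]
      rw [Finsupp.single_le_iff, ee_apply1]
      omega
    rw [hY0, add_zero]
    apply Finset.sum_eq_zero
    intro j hj
    rw [hC0 (v 1 - j) (by omega) 0, zero_mul]
  -- finiteness
  have hfin : FiniteDimensional ℂ (R2 ⧸ J) := by
    let T : Finset (R2 ⧸ J) :=
      (Finset.range d).image (fun j => Ideal.Quotient.mk J ((X 1 : R2) ^ j))
    refine ⟨⟨T, ?_⟩⟩
    rw [eq_top_iff]
    rintro x -
    obtain ⟨F, rfl⟩ := Ideal.Quotient.mk_surjective x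
    obtain ⟨P, hP1, hP2⟩ := hspan F
    have hmk : Ideal.Quotient.mk J F = Ideal.Quotient.mk J P :=
      (Ideal.Quotient.mk_eq_mk_iff_sub_mem F P).mpr hP2
    have hPsum : P = ∑ j ∈ Finset.range d, coeff (ee 0 j) P • (X 1 : R2) ^ j := by
      apply MvPowerSeries.ext
      intro v
      rw [coeff_ysum]
      by_cases h : v 0 = 0 ∧ v 1 < d
      · rw [if_pos h]
        conv_lhs => rw [show v = ee 0 (v 1) by conv_lhs => rw [eq_ee v]; rw [h.1]]
      · rw [if_neg h]
        by_contra hc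
        exact h (hP1 v hc)
    rw [hmk, hPsum]
    have : Ideal.Quotient.mk J (∑ j ∈ Finset.range d, coeff (ee 0 j) P • (X 1 : R2) ^ j)
        = ∑ j ∈ Finset.range d, coeff (ee 0 j) P • Ideal.Quotient.mk J ((X 1 : R2) ^ j) := by
      rw [← Ideal.Quotient.mkₐ_eq_mk ℂ J, map_sum]
      apply Finset.sum_congr rfl
      intro j _
      rw [map_smul, Ideal.Quotient.mkₐ_eq_mk]
    rw [this]
    apply Submodule.sum_mem
    intro j hj
    apply Submodule.smul_mem
    apply Submodule.subset_span
    exact Finset.mem_image_of_mem _ hj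
  refine ⟨hfin, ?_⟩
  haveI := hfin
  have hli : LinearIndependent ℂ (fun j : Fin d => Ideal.Quotient.mk J ((X 1 : R2) ^ (j : ℕ))) := by
    rw [Fintype.linearIndependent_iff]
    intro g hg
    set c : ℕ → ℂ := fun j => if h : j < d then g ⟨j, h⟩ else 0 with hcdef
    set P : R2 := ∑ j ∈ Finset.range d, c j • (X 1 : R2) ^ j with hPdef
    have hmkP : Ideal.Quotient.mk J P = 0 := by
      rw [hPdef, ← Ideal.Quotient.mkₐ_eq_mk ℂ J, map_sum]
      have hrw : ∀ j ∈ Finset.range d,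
          (Ideal.Quotient.mkₐ ℂ J) (c j • (X 1 : R2) ^ j)
            = c j • Ideal.Quotient.mk J ((X 1 : R2) ^ j) := by
        intro j hj
        rw [map_smul, Ideal.Quotient.mkₐ_eq_mk]
      rw [Finset.sum_congr rfl hrw]
      have h5 : ∑ j ∈ Finset.range d, c j • Ideal.Quotient.mk J ((X 1 : R2) ^ j)
          = ∑ i : Fin d, g i • Ideal.Quotient.mk J ((X 1 : R2) ^ (i : ℕ)) := by
        rw [← Fin.sum_univ_eq_sum_range (fun j => c j • Ideal.Quotient.mk J ((X 1 : R2) ^ j)) d]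
        apply Finset.sum_congr rfl
        intro i _
        rw [hcdef]
        simp only [Fin.is_lt, dif_pos, Fin.eta]
      rw [h5, hg]
    have hPJ : P ∈ J := (Ideal.Quotient.eq_zero_iff_mem).mp hmkP
    have hP0 : P = 0 := by
      apply hinj P ?_ hPJ
      intro v hv
      rw [hPdef, coeff_ysum] at hv
      by_contra hcon
      rw [if_neg] at hv
      · exact hv rfl
      · intro hcc; exact hcon hcc
    intro i
    have : coeff (ee 0 (i : ℕ)) P = c (i : ℕ) := by
      rw [hPdef, coeff_ysum]
      rw [if_pos ⟨by rw [ee_apply0], by rw [ee_apply1]; exact i.isLt⟩, ee_apply1]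
    rw [hP0, map_zero] at this
    have hci : c (i : ℕ) = g i := by
      rw [hcdef]
      simp only [Fin.is_lt, dif_pos, Fin.eta]
    rw [← hci, ← this]
  have := hli.fintype_card_le_finrank
  simpa using this

/-! ### The recursion for the coefficients -/

def NN : ℕ → ℕ
  | 0 => 0
  | k+1 => 4 * NN k + 1

lemma NN_succ (k : ℕ) : NN (k+1) = 4 * NN k + 1 := rfl

lemma NN_ge (k : ℕ) : k ≤ NN k := by
  induction k with
  | zero => simp [NN]
  | succ k IH => rw [NN_succ]; omega

lemma neg_one_pow_ne {x y : Fin 2} (h : x ≠ y) : ((-1 : ℂ)) ^ (x : ℕ) ≠ (-1) ^ (y : ℕ) := by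
  fin_cases x <;> fin_cases y <;> simp_all <;> norm_num

section rec

variable {a : BinSeq → ℕ → ℂ} (ha : IsCoeffFamily a)
include ha

lemma a0_ne (s : BinSeq) : a s 0 ≠ 0 := by
  rw [ha.1]; exact pow_ne_zero _ (by norm_num)

lemma claimA : ∀ k (s u : BinSeq), (∀ i, i < k → s i = u i) →
    ∀ n, n < NN k → a s n = a u n := by
  intro k
  induction k with
  | zero => intro s u h n hn; simp [NN] at hn
  | succ k IH =>
    intro s u h n
    induction n using Nat.strong_induction_on with
    | _ n IHn =>
      intro hn
      match n with
      | 0 => rw [ha.1, ha.1, h 0 (by omega)]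
      | Nat.succ m =>
        have h0 : a s 0 = a u 0 := by rw [ha.1, ha.1, h 0 (by omega)]
        have hsum : (∑ i ∈ Finset.Ico 1 (m+1), a s i * a s (m+1-i))
            = ∑ i ∈ Finset.Ico 1 (m+1), a u i * a u (m+1-i) := by
          apply Finset.sum_congr rfl
          intro i hi
          have hi' := Finset.mem_Ico.mp hi
          rw [IHn i (by omega) (by omega), IHn (m+1-i) (by omega) (by omega)]
        rw [ha.2, ha.2]
        by_cases h4 : 4 ∣ m
        · rw [if_pos h4, if_pos h4, hsum, h0]
          have hsh : a (shift s) (m/4) = a (shift u) (m/4) := by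
            apply IH (shift s) (shift u)
            · intro i hi
              show s (i+1) = u (i+1)
              exact h (i+1) (by omega)
            · rw [NN_succ] at hn; omega
          rw [hsh]
        · rw [if_neg h4, if_neg h4, hsum, h0]

lemma claimB : ∀ k (s u : BinSeq), (∀ i, i < k → s i = u i) → s k ≠ u k →
    a s (NN k) ≠ a u (NN k) := by
  intro k
  induction k with
  | zero =>
    intro s u _ hk
    show a s 0 ≠ a u 0
    rw [ha.1, ha.1]
    exact neg_one_pow_ne hk
  | succ k IH =>
    intro s u h hk
    have h0 : a s 0 = a u 0 := by rw [ha.1, ha.1, h 0 (by omega)]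
    have h2 : (2 : ℂ) * a s 0 ≠ 0 := mul_ne_zero two_ne_zero (a0_ne ha s)
    have hdvd : 4 ∣ 4 * NN k := Dvd.intro _ rfl
    have hsum : (∑ i ∈ Finset.Ico 1 (4 * NN k + 1), a s i * a s (4 * NN k + 1 - i))
        = ∑ i ∈ Finset.Ico 1 (4 * NN k + 1), a u i * a u (4 * NN k + 1 - i) := by
      apply Finset.sum_congr rfl
      intro i hi
      have hi' := Finset.mem_Ico.mp hi
      rw [claimA ha (k+1) s u (fun i hi => h i hi) i (by rw [NN_succ]; omega),
        claimA ha (k+1) s u (fun i hi => h i hi) (4 * NN k + 1 - i) (by rw [NN_succ]; omega)]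
    have hA : a (shift s) (NN k) ≠ a (shift u) (NN k) := by
      apply IH (shift s) (shift u)
      · intro i hi
        show s (i+1) = u (i+1)
        exact h (i+1) (by omega)
      · show s (k+1) ≠ u (k+1)
        exact hk
    rw [NN_succ]
    rw [ha.2, ha.2, if_pos hdvd, if_pos hdvd]
    rw [hsum, ← h0, Nat.mul_div_cancel_left _ (by norm_num)]
    intro heq
    apply hA
    have h4 : -(a (shift s) (NN k)) / (2 * a s 0) = -(a (shift u) (NN k)) / (2 * a s 0) := by
      linear_combination heq
    have h5 := congrArg (fun z : ℂ => z * (2 * a s 0)) h4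
    simp only [div_mul_cancel₀ _ h2] at h5
    exact neg_injective h5

end rec

/-! ### the series side -/

lemma tailSer_supp (a : BinSeq → ℕ → ℂ) (s : BinSeq) :
    ∀ v : Fin 2 →₀ ℕ, coeff v (tailSer a s) ≠ 0 → v 0 = 0 ∧ 2 ≤ v 1 := by
  classical
  intro v hv
  rw [coeff_apply] at hv
  simp only [tailSer] at hv
  by_cases hc : v 0 = 0 ∧ v 1 % 4 = 2
  · exact ⟨hc.1, by omega⟩
  · rw [if_neg hc] at hv; exact absurd rfl hv

lemma tailSer_coeff (a : BinSeq → ℕ → ℂ) (s : BinSeq) (j : ℕ) :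
    coeff (ee 0 j) (tailSer a s) = if j % 4 = 2 then a s ((j - 2) / 4) else 0 := by
  rw [coeff_apply]
  show (if (ee 0 j) 0 = 0 ∧ (ee 0 j) 1 % 4 = 2 then a s (((ee 0 j) 1 - 2) / 4) else 0) = _
  rw [ee_apply0, ee_apply1]
  by_cases hj : j % 4 = 2
  · rw [if_pos ⟨rfl, hj⟩, if_pos hj]
  · rw [if_neg (by tauto), if_neg hj]

lemma pair (a : BinSeq → ℕ → ℂ) (s u : BinSeq) (hex : ∃ m, a s m ≠ a u m) :
    FiniteDimensional ℂ (R2 ⧸ Ideal.span {phi a s, phi a u}) ∧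
      ∀ M : ℕ, (∀ m, m < M → a s m = a u m) →
        M ≤ Module.finrank ℂ (R2 ⧸ Ideal.span {phi a s, phi a u}) := by
  classical
  set m0 := Nat.find hex with hm0
  set d := 2 + 4 * m0 with hd
  have hps : phi a s = X 0 + tailSer a s := rfl
  have hpu : phi a u = X 0 + tailSer a u := rfl
  have hkey := key (tailSer a s) (tailSer a u) d (tailSer_supp a s) (tailSer_supp a u)
    ?_ ?_
  · rw [hps, hpu]
    refine ⟨hkey.1, ?_⟩
    intro M hM
    have hMm0 : M ≤ m0 := by
      rw [hm0]
      rw [Nat.le_find_iff]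
      intro m hm
      intro hne'
      exact hne' (hM m hm)
    calc M ≤ d := by omega
    _ ≤ _ := hkey.2
  · intro j hj
    rw [tailSer_coeff, tailSer_coeff]
    by_cases hjm : j % 4 = 2
    · rw [if_pos hjm, if_pos hjm]
      have hlt : (j - 2) / 4 < m0 := by omega
      have := Nat.find_min hex hlt
      exact (of_not_not this).symm
    · rw [if_neg hjm, if_neg hjm]
  · rw [tailSer_coeff, tailSer_coeff]
    have hdm : d % 4 = 2 := by omega
    rw [if_pos hdm, if_pos hdm]
    have : (d - 2) / 4 = m0 := by omega
    rw [this]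
    exact (Nat.find_spec hex).symm

/-! ### the sequences -/

def pSeq (ν : ℕ → ℝ) : ℕ → ℕ
  | 0 => 0
  | j+1 => pSeq ν j + 1 + (⌊max (ν (pSeq ν j + 1)) 0⌋₊ + 1)

lemma pSeq_mono (ν : ℕ → ℝ) : StrictMono (pSeq ν) := by
  apply strictMono_nat_of_lt_succ
  intro j
  show pSeq ν j < pSeq ν j + 1 + (⌊max (ν (pSeq ν j + 1)) 0⌋₊ + 1)
  omega

lemma shift_iter (t : BinSeq) (n i : ℕ) : shift^[n] t i = t (i + n) := by
  induction n generalizing t with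
  | zero => rfl
  | succ n IH =>
    rw [Function.iterate_succ_apply, IH (shift t)]
    show t (i + n + 1) = t (i + (n + 1))
    exact congrArg t (by omega)

end Stmt10Aux

/-- For any `ν : ℕ → ℝ` there exist binary sequences `s, t ∈ S` such that
(i) for every `n ≥ 0` the local intersection multiplicity
`μ(n) = dim_ℂ ℂ⟦X,Y⟧/(φ_s, φ_{σⁿ(t)})` is finite, and
(ii) `μ(n) > ν(n)` for infinitely many `n`.
(Since `φ_u ∣ φ_{σ(u)}(X² − Y⁴, Y⁴)`, i.e. `f(x,y) = (x² − y⁴, y⁴)` maps `C_u` into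
`C_{σ(u)}`, the number `μ(n)` is the local intersection multiplicity `C_s · fⁿ(C_t)`.) -/
theorem stmt10 (a : BinSeq → ℕ → ℂ) (ha : IsCoeffFamily a) (ν : ℕ → ℝ) :
    ∃ s t : BinSeq,
      (∀ n : ℕ,
        FiniteDimensional ℂ
          (MvPowerSeries (Fin 2) ℂ ⧸ Ideal.span {phi a s, phi a (shift^[n] t)})) ∧
      {n : ℕ |
        ν n < (Module.finrank ℂ
          (MvPowerSeries (Fin 2) ℂ ⧸ Ideal.span {phi a s, phi a (shift^[n] t)}) : ℝ)}.Infinite := by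
  classical
  have hpair := Stmt10Aux.pair a
  set s0 : BinSeq := (fun _ => 0) with hs0
  set tt : BinSeq := (fun n => if n ∈ Set.range (Stmt10Aux.pSeq ν) then 1 else 0) with htt
  have hexFor : ∀ n : ℕ, ∃ m, a s0 m ≠ a (shift^[n] tt) m := by
    intro n
    have hpn : n ≤ Stmt10Aux.pSeq ν n := (Stmt10Aux.pSeq_mono ν).le_apply
    have h1 : shift^[n] tt (Stmt10Aux.pSeq ν n - n) = 1 := by
      rw [Stmt10Aux.shift_iter]
      have h2 : Stmt10Aux.pSeq ν n - n + n = Stmt10Aux.pSeq ν n := by omega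
      rw [htt]
      show (if _ ∈ Set.range (Stmt10Aux.pSeq ν) then (1 : Fin 2) else 0) = 1
      rw [h2, if_pos ⟨n, rfl⟩]
    have hK : ∃ kk, s0 kk ≠ shift^[n] tt kk := by
      refine ⟨Stmt10Aux.pSeq ν n - n, ?_⟩
      rw [h1]
      show (0 : Fin 2) ≠ 1
      decide
    exact ⟨Stmt10Aux.NN (Nat.find hK),
      Stmt10Aux.claimB ha (Nat.find hK) s0 (shift^[n] tt)
        (fun i hi => of_not_not (Nat.find_min hK hi)) (Nat.find_spec hK)⟩
  refine ⟨s0, tt, fun n => (hpair s0 (shift^[n] tt) (hexFor n)).1, ?_⟩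
  apply Set.infinite_of_injective_forall_mem (f := fun j : ℕ => Stmt10Aux.pSeq ν j + 1)
  case hi =>
    intro i j hij
    exact (Stmt10Aux.pSeq_mono ν).injective (by simpa using hij)
  case hf =>
    intro j
    simp only [Set.mem_setOf_eq]
    have hj1 : Stmt10Aux.pSeq ν (j+1)
        = Stmt10Aux.pSeq ν j + 1 + (⌊max (ν (Stmt10Aux.pSeq ν j + 1)) 0⌋₊ + 1) := rfl
    set n := Stmt10Aux.pSeq ν j + 1 with hn
    set kj := ⌊max (ν n) 0⌋₊ + 1 with hkj
    have hagree : ∀ i, i < kj → s0 i = shift^[n] tt i := by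
      intro i hi
      rw [Stmt10Aux.shift_iter]
      have hnotin : (i + n) ∉ Set.range (Stmt10Aux.pSeq ν) := by
        rintro ⟨l, hl⟩
        rcases le_or_gt l j with h' | h'
        · have := (Stmt10Aux.pSeq_mono ν).monotone h'
          omega
        · have := (Stmt10Aux.pSeq_mono ν).monotone (show j+1 ≤ l by omega)
          omega
      rw [htt]
      show (0 : Fin 2) = (if _ ∈ Set.range (Stmt10Aux.pSeq ν) then (1 : Fin 2) else 0)
      rw [if_neg hnotin]
    have hA : ∀ m, m < Stmt10Aux.NN kj → a s0 m = a (shift^[n] tt) m :=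
      Stmt10Aux.claimA ha kj _ _ hagree
    have hle := (hpair s0 (shift^[n] tt) (hexFor n)).2 (Stmt10Aux.NN kj) hA
    have h6 : max (ν n) 0 < (kj : ℝ) := by
      have := Nat.lt_floor_add_one (max (ν n) 0)
      rw [hkj]
      push_cast
      exact this
    calc ν n ≤ max (ν n) 0 := le_max_left _ _
    _ < (kj : ℝ) := h6
    _ ≤ (Stmt10Aux.NN kj : ℝ) := by exact_mod_cast Stmt10Aux.NN_ge kj
    _ ≤ _ := by exact_mod_cast hle
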